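/- arXiv:2506.02557 — 2 statements merged into one kernel-verified Lean document; each statement's English description precedes it below -/
import Mathlib

section
/- Let E be a real inner product space, let u₀, u, v ∈ E be nonzero vectors, and let λ ≥ 0. If ‖u − u₀‖ ≤ λ, then |⟪u₀, v⟫/(‖u₀‖·‖v‖) − ⟪u, v⟫/(‖u‖·‖v‖)| ≤ 2λ / max(‖u‖, ‖u₀‖). -/
open RealInnerProductSpace

lemma unit_diff_bound {E : Type*} [NormedAddCommGroup E] [InnerProductSpace ℝ E]
    (u₀ u : E) (hu₀ : u₀ ≠ 0) (hu : u ≠ 0) (hle : ‖u₀‖ ≤ ‖u‖) :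
    ‖(‖u‖)⁻¹ • u - (‖u₀‖)⁻¹ • u₀‖ ≤ 2 * ‖u - u₀‖ / ‖u‖ := by
  have ha : (0:ℝ) < ‖u‖ := norm_pos_iff.mpr hu
  have hb : (0:ℝ) < ‖u₀‖ := norm_pos_iff.mpr hu₀
  have hinv : (‖u‖)⁻¹ ≤ (‖u₀‖)⁻¹ := inv_anti₀ hb hle
  have hdecomp : (‖u‖)⁻¹ • u - (‖u₀‖)⁻¹ • u₀
      = (‖u‖)⁻¹ • (u - u₀) + ((‖u‖)⁻¹ - (‖u₀‖)⁻¹) • u₀ := by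
    module
  rw [hdecomp]
  have h1 : ‖(‖u‖)⁻¹ • (u - u₀)‖ = (‖u‖)⁻¹ * ‖u - u₀‖ := by
    rw [norm_smul, Real.norm_eq_abs, abs_of_pos (inv_pos.mpr ha)]
  have h2 : ‖((‖u‖)⁻¹ - (‖u₀‖)⁻¹) • u₀‖ = ((‖u₀‖)⁻¹ - (‖u‖)⁻¹) * ‖u₀‖ := by
    rw [norm_smul, Real.norm_eq_abs, abs_of_nonpos (sub_nonpos.mpr hinv), neg_sub]
  have hnn : ‖u‖ - ‖u₀‖ ≤ ‖u - u₀‖ := by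
    linarith [abs_le.mp (abs_norm_sub_norm_le u u₀)]
  calc ‖(‖u‖)⁻¹ • (u - u₀) + ((‖u‖)⁻¹ - (‖u₀‖)⁻¹) • u₀‖
      ≤ ‖(‖u‖)⁻¹ • (u - u₀)‖ + ‖((‖u‖)⁻¹ - (‖u₀‖)⁻¹) • u₀‖ := norm_add_le _ _
    _ = (‖u - u₀‖ + (‖u‖ - ‖u₀‖)) / ‖u‖ := by
        rw [h1, h2]; field_simp
    _ ≤ 2 * ‖u - u₀‖ / ‖u‖ := by
        gcongr ?_ / ‖u‖
        linarith

theorem cosine_similarity_stability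
    {E : Type*} [NormedAddCommGroup E] [InnerProductSpace ℝ E]
    (u₀ u v : E) (hu₀ : u₀ ≠ 0) (hu : u ≠ 0) (hv : v ≠ 0)
    (lam : ℝ) (hlam : 0 ≤ lam) (h : ‖u - u₀‖ ≤ lam) :
    |⟪u₀, v⟫ / (‖u₀‖ * ‖v‖) - ⟪u, v⟫ / (‖u‖ * ‖v‖)| ≤ 2 * lam / max ‖u‖ ‖u₀‖ := by
  have ha : (0:ℝ) < ‖u‖ := norm_pos_iff.mpr hu
  have hb : (0:ℝ) < ‖u₀‖ := norm_pos_iff.mpr hu₀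
  have hcv : (0:ℝ) < ‖v‖ := norm_pos_iff.mpr hv
  set w : E := (‖u₀‖)⁻¹ • u₀ - (‖u‖)⁻¹ • u with hw
  have heq : ⟪u₀, v⟫ / (‖u₀‖ * ‖v‖) - ⟪u, v⟫ / (‖u‖ * ‖v‖) = ⟪w, v⟫ / ‖v‖ := by
    rw [hw, inner_sub_left, real_inner_smul_left, real_inner_smul_left]
    field_simp
  rw [heq]
  have hCS : |⟪w, v⟫ / ‖v‖| ≤ ‖w‖ := by
    rw [abs_div, abs_of_pos hcv, div_le_iff₀ hcv]
    exact abs_real_inner_le_norm w v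
  refine hCS.trans ?_
  rcases le_total ‖u₀‖ ‖u‖ with hle | hle
  · rw [max_eq_left hle]
    have := unit_diff_bound u₀ u hu₀ hu hle
    rw [← norm_neg] at this
    simp only [neg_sub] at this
    refine this.trans ?_
    gcongr
  · rw [max_eq_right hle]
    have := unit_diff_bound u u₀ hu hu₀ hle
    rw [norm_sub_rev u₀ u] at this
    refine this.trans ?_
    gcongr
end

section
/- Vector Bernstein inequality: Let X₁, …, X_M be independent random vectors taking values in ℝ^d (equivalently, a finite-dimensional real inner product space), each with mean zero, and suppose there exist constants μ > 0 and σ > 0 such that almost surely ‖X_m‖ ≤ μ for every m, and E[‖X_m‖²] ≤ σ² for every m. Let Z = (1/M) Σ_{m=1}^M X_m. Then for every ε with 0 < ε < σ²/μ, P(‖Z‖ ≥ ε) ≤ exp(−Mε²/(8σ²) + 1/4). -/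
open MeasureTheory ProbabilityTheory

namespace VB


lemma exp_le_one_add_add_sq {t : ℝ} (ht : t ≤ 1) : Real.exp t ≤ 1 + t + t ^ 2 := by
  rcases le_or_gt t (-1) with h | h
  · have h1 : Real.exp t < 1 := Real.exp_lt_one_iff.2 (by linarith)
    nlinarith
  · have habs : |t| ≤ 1 := abs_le.2 ⟨h.le, ht⟩
    have hb := Real.exp_bound habs (by norm_num : 0 < 3)
    have hs : ∑ m ∈ Finset.range 3, t ^ m / m.factorial = 1 + t + t ^ 2 / 2 := by
      norm_num [Finset.sum_range_succ]
    rw [hs] at hb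
    have h3 : |t| ^ 3 ≤ t ^ 2 := by
      have h2 : |t| ^ 3 = t ^ 2 * |t| := by
        rw [pow_succ, sq_abs]
      rw [h2]
      nlinarith [abs_nonneg t, sq_nonneg t]
    have hb' := (abs_sub_le_iff.1 hb).1
    have hc : (|t| ^ 3 * ((Nat.succ 3 : ℝ) / ((Nat.factorial 3 : ℝ) * (3:ℕ))) : ℝ) = |t| ^ 3 * (2/9) := by
      norm_num [Nat.factorial]
    rw [hc] at hb'
    nlinarith [abs_nonneg t]

lemma integrable_of_ae_bound {α : Type*} [MeasurableSpace α] {ν : Measure α} [IsFiniteMeasure ν]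
    {f : α → ℝ} (hm : AEStronglyMeasurable f ν) {C : ℝ} (h : ∀ᵐ a ∂ν, |f a| ≤ C) :
    Integrable f ν :=
  Integrable.mono' (integrable_const C) hm (by simpa [Real.norm_eq_abs] using h)


variable {E : Type*} [NormedAddCommGroup E] [MeasurableSpace E] [BorelSpace E]
  [SecondCountableTopology E]

omit [MeasurableSpace E] [BorelSpace E] [SecondCountableTopology E] in
lemma lip_continuous {φ : E → ℝ} (hφ : ∀ y z, |φ y - φ z| ≤ ‖y - z‖) : Continuous φ := by
  have : LipschitzWith 1 φ := LipschitzWith.of_dist_le_mul fun y z => by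
    simpa [Real.dist_eq, dist_eq_norm] using hφ y z
  exact this.continuous

lemma step_bound {ν : Measure E} [IsProbabilityMeasure ν] {mu sigma lam : ℝ}
    (hmu : 0 < mu)
    (hbd : ∀ᵐ y ∂ν, ‖y‖ ≤ mu) (hvar : ∫ y, ‖y‖ ^ 2 ∂ν ≤ sigma ^ 2)
    (hlam : 0 ≤ lam) (hlm : 2 * lam * mu ≤ 1)
    {φ : E → ℝ} (hφ : ∀ y z, |φ y - φ z| ≤ ‖y - z‖) :
    ∫ y, Real.exp (lam * (φ y - ∫ z, φ z ∂ν)) ∂ν ≤ Real.exp (lam ^ 2 * sigma ^ 2) := by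
  have hcont : Continuous φ := lip_continuous hφ
  have hφ0 : ∀ y, |φ y - φ 0| ≤ ‖y‖ := fun y => by simpa using hφ y 0
  have hmeasφ : AEStronglyMeasurable φ ν := hcont.aestronglyMeasurable
  have hφ_int : Integrable φ ν := by
    refine integrable_of_ae_bound hmeasφ (C := |φ 0| + mu) ?_
    filter_upwards [hbd] with y hy
    have := hφ0 y
    have := abs_sub_abs_le_abs_sub (φ y) (φ 0)
    nlinarith [abs_nonneg (φ y - φ 0), abs_sub (φ y) (φ 0)]
  set c := ∫ z, φ z ∂ν with hc
  -- |φ 0 - c| ≤ mu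
  have hnorm_int : Integrable (fun y : E => ‖y‖) ν :=
    integrable_of_ae_bound continuous_norm.aestronglyMeasurable
      (by filter_upwards [hbd] with y hy; simpa [abs_of_nonneg (norm_nonneg y)] using hy)
  have h0c : |φ 0 - c| ≤ mu := by
    have h1 : φ 0 - c = ∫ y, (φ 0 - φ y) ∂ν := by
      rw [integral_sub (integrable_const _) hφ_int, integral_const]
      simp [hc]
    rw [h1]
    calc |∫ y, (φ 0 - φ y) ∂ν| ≤ ∫ y, |φ 0 - φ y| ∂ν := by
          simpa [Real.norm_eq_abs] using
            norm_integral_le_integral_norm (μ := ν) (f := fun y => φ 0 - φ y)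
      _ ≤ ∫ y, ‖y‖ ∂ν := by
          refine integral_mono ((integrable_const _).sub hφ_int).abs hnorm_int fun y => ?_
          simpa [abs_sub_comm] using hφ0 y
      _ ≤ ∫ _y, mu ∂ν := integral_mono_ae hnorm_int (integrable_const _) hbd
      _ = mu := by simp
  have haec : ∀ᵐ y ∂ν, |φ y - c| ≤ 2 * mu := by
    filter_upwards [hbd] with y hy
    have := hφ0 y
    have := abs_sub (φ y - φ 0) (c - φ 0)
    have h2 : |φ y - c| ≤ |φ y - φ 0| + |φ 0 - c| := by
      have := abs_sub_le (φ y) (φ 0) c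
      linarith
    linarith
  have hsubint : Integrable (fun y => φ y - c) ν := hφ_int.sub (integrable_const _)
  have hsqint : Integrable (fun y => (φ y - c) ^ 2) ν := by
    refine integrable_of_ae_bound ((hcont.sub continuous_const).pow 2).aestronglyMeasurable
      (C := (2 * mu) ^ 2) ?_
    filter_upwards [haec] with y hy
    rw [abs_of_nonneg (sq_nonneg _)]
    calc (φ y - c) ^ 2 = |φ y - c| ^ 2 := (sq_abs _).symm
      _ ≤ (2 * mu) ^ 2 := by nlinarith [abs_nonneg (φ y - c)]
  have hexp_int : Integrable (fun y => Real.exp (lam * (φ y - c))) ν := by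
    refine integrable_of_ae_bound
      ((Real.continuous_exp.comp (continuous_const.mul (hcont.sub continuous_const))).aestronglyMeasurable)
      (C := Real.exp (2 * lam * mu)) ?_
    filter_upwards [haec] with y hy
    rw [abs_of_nonneg (Real.exp_nonneg _)]
    apply Real.exp_le_exp.2
    calc lam * (φ y - c) ≤ lam * |φ y - c| := by
          exact mul_le_mul_of_nonneg_left (le_abs_self _) hlam
      _ ≤ lam * (2 * mu) := by exact mul_le_mul_of_nonneg_left hy hlam
      _ = 2 * lam * mu := by ring
  -- pointwise exponential bound
  have hpt : ∀ᵐ y ∂ν, Real.exp (lam * (φ y - c)) ≤ 1 + lam * (φ y - c) + (lam * (φ y - c)) ^ 2 := by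
    filter_upwards [haec] with y hy
    refine exp_le_one_add_add_sq ?_
    calc lam * (φ y - c) ≤ lam * |φ y - c| := mul_le_mul_of_nonneg_left (le_abs_self _) hlam
      _ ≤ lam * (2 * mu) := mul_le_mul_of_nonneg_left hy hlam
      _ = 2 * lam * mu := by ring
      _ ≤ 1 := hlm
  have hpoly_int : Integrable (fun y => 1 + lam * (φ y - c) + (lam * (φ y - c)) ^ 2) ν := by
    have h2 : Integrable (fun y => (lam * (φ y - c)) ^ 2) ν := by
      have : (fun y => (lam * (φ y - c)) ^ 2) = fun y => lam ^ 2 * (φ y - c) ^ 2 := by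
        funext y; ring
      rw [this]
      exact hsqint.const_mul _
    exact ((integrable_const _).add (hsubint.const_mul lam)).add h2
  have hmean0 : ∫ y, (φ y - c) ∂ν = 0 := by
    rw [integral_sub hφ_int (integrable_const _), integral_const]
    simp [hc]
  -- variance bound
  have hvarφ : ∫ y, (φ y - c) ^ 2 ∂ν ≤ sigma ^ 2 := by
    set b := φ 0 with hb
    have hexpand : ∀ y : E, (φ y - b) ^ 2 = (φ y - c) ^ 2 + (2 * (c - b)) * (φ y - c) + (c - b) ^ 2 := by
      intro y; ring
    have hsqint2 : Integrable (fun y => (φ y - b) ^ 2) ν := by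
      refine integrable_of_ae_bound ((hcont.sub continuous_const).pow 2).aestronglyMeasurable
        (C := mu ^ 2) ?_
      filter_upwards [hbd] with y hy
      rw [abs_of_nonneg (sq_nonneg _)]
      calc (φ y - b) ^ 2 = |φ y - b| ^ 2 := (sq_abs _).symm
        _ ≤ ‖y‖ ^ 2 := by nlinarith [hφ0 y, abs_nonneg (φ y - b), norm_nonneg y]
        _ ≤ mu ^ 2 := by nlinarith [norm_nonneg y]
    have hnormsq_int : Integrable (fun y : E => ‖y‖ ^ 2) ν := by
      refine integrable_of_ae_bound (continuous_norm.pow 2).aestronglyMeasurable (C := mu ^ 2) ?_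
      filter_upwards [hbd] with y hy
      rw [abs_of_nonneg (sq_nonneg _)]
      nlinarith [norm_nonneg y]
    have hEexpand : ∫ y, (φ y - b) ^ 2 ∂ν
        = ∫ y, (φ y - c) ^ 2 ∂ν + (c - b) ^ 2 := by
      have : (fun y => (φ y - b) ^ 2)
          = fun y => ((φ y - c) ^ 2 + (2 * (c - b)) * (φ y - c)) + (c - b) ^ 2 := by
        funext y; ring
      have hA : Integrable (fun y => (φ y - c) ^ 2 + 2 * (c - b) * (φ y - c)) ν := by
        exact hsqint.add (hsubint.const_mul _)
      rw [this, integral_add hA (integrable_const _), integral_add hsqint (hsubint.const_mul _),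
        integral_const_mul, hmean0]
      simp
    have hle : ∫ y, (φ y - b) ^ 2 ∂ν ≤ ∫ y, ‖y‖ ^ 2 ∂ν := by
      refine integral_mono hsqint2 hnormsq_int fun y => ?_
      calc (φ y - b) ^ 2 = |φ y - b| ^ 2 := (sq_abs _).symm
        _ ≤ ‖y‖ ^ 2 := by nlinarith [hφ0 y, abs_nonneg (φ y - b), norm_nonneg y]
    nlinarith [sq_nonneg (c - b)]
  calc ∫ y, Real.exp (lam * (φ y - c)) ∂ν
      ≤ ∫ y, (1 + lam * (φ y - c) + (lam * (φ y - c)) ^ 2) ∂ν :=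
        integral_mono_ae hexp_int hpoly_int hpt
    _ = 1 + lam ^ 2 * ∫ y, (φ y - c) ^ 2 ∂ν := by
        have h1 : (fun y => 1 + lam * (φ y - c) + (lam * (φ y - c)) ^ 2)
            = fun y => (1 + lam * (φ y - c)) + lam ^ 2 * (φ y - c) ^ 2 := by
          funext y; ring
        have hA : Integrable (fun y => 1 + lam * (φ y - c)) ν := by
          exact (integrable_const _).add (hsubint.const_mul lam)
        have hB : Integrable (fun y => lam ^ 2 * (φ y - c) ^ 2) ν := hsqint.const_mul _
        rw [h1, integral_add hA hB, integral_add (integrable_const _) (hsubint.const_mul lam),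
          integral_const_mul, integral_const_mul, hmean0]
        simp
    _ ≤ 1 + lam ^ 2 * sigma ^ 2 := by nlinarith [sq_nonneg lam]
    _ ≤ Real.exp (lam ^ 2 * sigma ^ 2) := by linarith [Real.add_one_le_exp (lam ^ 2 * sigma ^ 2)]

lemma pi_lip_continuous {n : ℕ} {f : (Fin n → E) → ℝ}
    (hf : ∀ x y, |f x - f y| ≤ ∑ i, ‖x i - y i‖) : Continuous f := by
  have : LipschitzWith n f := LipschitzWith.of_dist_le_mul fun x y => by
    rw [Real.dist_eq]
    refine (hf x y).trans ?_
    calc ∑ i, ‖x i - y i‖ ≤ ∑ _i : Fin n, dist x y := by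
          refine Finset.sum_le_sum fun i _ => ?_
          rw [← dist_eq_norm]
          exact dist_le_pi_dist x y i
      _ = n * dist x y := by simp [Finset.sum_const, nsmul_eq_mul]
  exact this.continuous

lemma pi_ae_coord_bound {n : ℕ} {ν : Fin n → Measure E} [∀ i, IsProbabilityMeasure (ν i)]
    {mu : ℝ} (hbd : ∀ i, ∀ᵐ y ∂ν i, ‖y‖ ≤ mu) :
    ∀ᵐ x ∂Measure.pi ν, ∀ i, ‖x i‖ ≤ mu := by
  rw [ae_all_iff]
  intro i
  have h0 : ν i {y : E | ¬ ‖y‖ ≤ mu} = 0 := by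
    have := hbd i
    rwa [ae_iff] at this
  have := Measure.pi_eval_preimage_null (μ := ν) (i := i) h0
  rw [ae_iff]
  simpa [Function.eval, Set.preimage] using this

lemma mgf_pi_bound {mu sigma lam : ℝ} (hmu : 0 < mu) (hlam : 0 ≤ lam) (hlm : 2 * lam * mu ≤ 1) :
    ∀ (n : ℕ) (ν : Fin n → Measure E) (_hprob : ∀ i, IsProbabilityMeasure (ν i))
      (_hbd : ∀ i, ∀ᵐ y ∂ν i, ‖y‖ ≤ mu) (_hvar : ∀ i, ∫ y, ‖y‖ ^ 2 ∂ν i ≤ sigma ^ 2)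
      (f : (Fin n → E) → ℝ) (_hf : ∀ x y, |f x - f y| ≤ ∑ i, ‖x i - y i‖),
      ∫ x, Real.exp (lam * (f x - ∫ x', f x' ∂Measure.pi ν)) ∂Measure.pi ν
        ≤ Real.exp (n * (lam ^ 2 * sigma ^ 2)) := by
  intro n
  induction n with
  | zero =>
    intro ν hprob hbd hvar f hf
    haveI := hprob
    have hconst : ∀ x : Fin 0 → E, f x = f default := fun x => by
      congr 1
      exact Subsingleton.elim _ _
    have h1 : ∫ x', f x' ∂Measure.pi ν = f default := by
      rw [integral_congr_ae (Filter.Eventually.of_forall hconst)]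
      simp
    calc ∫ x, Real.exp (lam * (f x - ∫ x', f x' ∂Measure.pi ν)) ∂Measure.pi ν
        = ∫ _x, (1 : ℝ) ∂Measure.pi ν := by
          refine integral_congr_ae (Filter.Eventually.of_forall fun x => ?_)
          simp only [h1, hconst x, sub_self, mul_zero, Real.exp_zero]
      _ = 1 := by simp
      _ ≤ Real.exp ((0 : ℕ) * (lam ^ 2 * sigma ^ 2)) := by simp
  | succ n ih =>
    intro ν hprob hbd hvar f hf
    haveI := hprob
    haveI : ∀ j : Fin n, IsProbabilityMeasure (ν ((0 : Fin (n+1)).succAbove j)) :=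
      fun j => hprob _
    set ins : E → (Fin n → E) → (Fin (n+1) → E) := fun y x => Fin.insertNth 0 y x with hins
    set π' : Measure (Fin n → E) :=
      Measure.pi (fun j => ν ((0 : Fin (n+1)).succAbove j)) with hπ'
    have hmp : MeasurePreserving
        (MeasurableEquiv.piFinSuccAbove (fun _ : Fin (n+1) => E) 0)
        (Measure.pi ν) ((ν 0).prod π') := measurePreserving_piFinSuccAbove ν 0
    have hmps := hmp.symm
    -- transfer of integrals to the product space
    have key : ∀ q : (Fin (n+1) → E) → ℝ,
        ∫ x, q x ∂Measure.pi ν = ∫ p : E × (Fin n → E), q (ins p.1 p.2) ∂((ν 0).prod π') := by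
      intro q
      rw [← hmps.integral_comp' q]
      rfl
    have keyInt : ∀ q : (Fin (n+1) → E) → ℝ, Integrable q (Measure.pi ν) →
        Integrable (fun p : E × (Fin n → E) => q (ins p.1 p.2)) ((ν 0).prod π') := by
      intro q hq
      exact (hmps.integrable_comp_emb (MeasurableEquiv.measurableEmbedding _)).2 hq
    -- Lipschitz facts for insertions
    have hsum : ∀ (y : E) (x : Fin n → E) (y' : E) (x' : Fin n → E),
        |f (ins y x) - f (ins y' x')| ≤ ‖y - y'‖ + ∑ j, ‖x j - x' j‖ := by
      intro y x y' x'
      refine (hf _ _).trans (le_of_eq ?_)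
      rw [Fin.sum_univ_succAbove (fun i => ‖ins y x i - ins y' x' i‖) 0]
      simp [hins, Fin.insertNth_apply_same, Fin.insertNth_apply_succAbove]
    have hlip_y : ∀ (x : Fin n → E) (y y' : E),
        |f (ins y x) - f (ins y' x)| ≤ ‖y - y'‖ := by
      intro x y y'
      simpa using hsum y x y' x
    have hlip_x : ∀ (y : E) (x x' : Fin n → E),
        |f (ins y x) - f (ins y x')| ≤ ∑ j, ‖x j - x' j‖ := by
      intro y x x'
      simpa using hsum y x y x'
    -- the averaged function
    set g : (Fin n → E) → ℝ := fun x => ∫ y, f (ins y x) ∂ν 0 with hg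
    have hg_int : ∀ x, Integrable (fun y => f (ins y x)) (ν 0) := by
      intro x
      have hcont : Continuous fun y => f (ins y x) := lip_continuous (hlip_y x)
      refine integrable_of_ae_bound hcont.aestronglyMeasurable
        (C := |f (ins 0 x)| + mu) ?_
      filter_upwards [hbd 0] with y hy
      have h1 : |f (ins y x) - f (ins 0 x)| ≤ ‖y‖ := by simpa using hlip_y x y 0
      have h2 := abs_sub_abs_le_abs_sub (f (ins y x)) (f (ins 0 x))
      linarith
    have hg_lip : ∀ x x', |g x - g x'| ≤ ∑ j, ‖x j - x' j‖ := by
      intro x x'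
      have hdiff : g x - g x' = ∫ y, (f (ins y x) - f (ins y x')) ∂ν 0 := by
        rw [integral_sub (hg_int x) (hg_int x')]
      rw [hdiff]
      calc |∫ y, (f (ins y x) - f (ins y x')) ∂ν 0|
          ≤ ∫ y, |f (ins y x) - f (ins y x')| ∂ν 0 := by
            simpa [Real.norm_eq_abs] using
              norm_integral_le_integral_norm (μ := ν 0)
                (f := fun y => f (ins y x) - f (ins y x'))
        _ ≤ ∫ _y, (∑ j, ‖x j - x' j‖) ∂ν 0 := by
            refine integral_mono ((hg_int x).sub (hg_int x')).abs (integrable_const _)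
              fun y => hlip_x y x x'
        _ = ∑ j, ‖x j - x' j‖ := by simp
    -- a.e. coordinate bounds and integrability on the pi space
    have haepi : ∀ᵐ x ∂Measure.pi ν, ∀ i, ‖x i‖ ≤ mu := pi_ae_coord_bound hbd
    have haepi' : ∀ᵐ x ∂π', ∀ j, ‖x j‖ ≤ mu := pi_ae_coord_bound (fun j => hbd _)
    have hfcont : Continuous f := pi_lip_continuous hf
    have hf_bound : ∀ x : Fin (n+1) → E, |f x - f 0| ≤ ∑ i, ‖x i‖ := fun x => by
      simpa using hf x 0
    have hsum_le : ∀ x : Fin (n+1) → E, (∀ i, ‖x i‖ ≤ mu) → ∑ i, ‖x i‖ ≤ (n+1) * mu := by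
      intro x hx
      calc ∑ i, ‖x i‖ ≤ ∑ _i : Fin (n+1), mu := Finset.sum_le_sum fun i _ => hx i
        _ = (n+1) * mu := by simp [mul_comm]
    have hf_int : Integrable f (Measure.pi ν) := by
      refine integrable_of_ae_bound hfcont.aestronglyMeasurable
        (C := |f 0| + (n+1) * mu) ?_
      filter_upwards [haepi] with x hx
      have h2 := abs_sub_abs_le_abs_sub (f x) (f 0)
      have := (hf_bound x).trans (hsum_le x hx)
      linarith
    set c : ℝ := ∫ x', f x' ∂Measure.pi ν with hcdef
    have hcb : |c - f 0| ≤ (n+1) * mu := by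
      have h1 : c - f 0 = ∫ x, (f x - f 0) ∂Measure.pi ν := by
        rw [integral_sub hf_int (integrable_const _)]
        simp [hcdef]
      rw [h1]
      calc |∫ x, (f x - f 0) ∂Measure.pi ν| ≤ ∫ x, |f x - f 0| ∂Measure.pi ν := by
            simpa [Real.norm_eq_abs] using
              norm_integral_le_integral_norm (μ := Measure.pi ν) (f := fun x => f x - f 0)
        _ ≤ ∫ _x, ((n+1) * mu : ℝ) ∂Measure.pi ν := by
            refine integral_mono_ae (hf_int.sub (integrable_const _)).abs (integrable_const _) ?_
            filter_upwards [haepi] with x hx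
            exact (hf_bound x).trans (hsum_le x hx)
        _ = (n+1) * mu := by simp
    have haefc : ∀ᵐ x ∂Measure.pi ν, |f x - c| ≤ 2 * ((n+1) * mu) := by
      filter_upwards [haepi] with x hx
      have h1 := (hf_bound x).trans (hsum_le x hx)
      have h2 := abs_sub_le (f x) (f 0) c
      have h3 : |f 0 - c| = |c - f 0| := abs_sub_comm _ _
      linarith
    have hexp_int_pi : Integrable (fun x => Real.exp (lam * (f x - c))) (Measure.pi ν) := by
      refine integrable_of_ae_bound
        ((Real.continuous_exp.comp
          (continuous_const.mul (hfcont.sub continuous_const))).aestronglyMeasurable)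
        (C := Real.exp (lam * (2 * ((n+1) * mu)))) ?_
      filter_upwards [haefc] with x hx
      rw [abs_of_nonneg (Real.exp_nonneg _)]
      apply Real.exp_le_exp.2
      calc lam * (f x - c) ≤ lam * |f x - c| :=
            mul_le_mul_of_nonneg_left (le_abs_self _) hlam
        _ ≤ lam * (2 * ((n+1) * mu)) := mul_le_mul_of_nonneg_left hx hlam
    -- identification of c with the mean of g
    have hprodInt_f : Integrable (fun p : E × (Fin n → E) => f (ins p.1 p.2)) ((ν 0).prod π') :=
      keyInt f hf_int
    have hc_eq : c = ∫ x, g x ∂π' := by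
      rw [hcdef, key f, integral_prod_symm _ hprodInt_f]
    -- main computation
    have hprodInt : Integrable
        (fun p : E × (Fin n → E) => Real.exp (lam * (f (ins p.1 p.2) - c)))
        ((ν 0).prod π') := keyInt _ hexp_int_pi
    have hinner : ∀ x, ∫ y, Real.exp (lam * (f (ins y x) - c)) ∂ν 0
        ≤ Real.exp (lam ^ 2 * sigma ^ 2) * Real.exp (lam * (g x - c)) := by
      intro x
      have hstep := step_bound hmu (hbd 0) (hvar 0) hlam hlm (hlip_y x)
      calc ∫ y, Real.exp (lam * (f (ins y x) - c)) ∂ν 0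
          = Real.exp (lam * (g x - c)) * ∫ y, Real.exp (lam * (f (ins y x) - g x)) ∂ν 0 := by
            rw [← integral_const_mul]
            refine integral_congr_ae (Filter.Eventually.of_forall fun y => ?_)
            show Real.exp (lam * (f (ins y x) - c))
                = Real.exp (lam * (g x - c)) * Real.exp (lam * (f (ins y x) - g x))
            rw [← Real.exp_add]
            ring_nf
        _ ≤ Real.exp (lam * (g x - c)) * Real.exp (lam ^ 2 * sigma ^ 2) :=
            mul_le_mul_of_nonneg_left hstep (Real.exp_nonneg _)
        _ = Real.exp (lam ^ 2 * sigma ^ 2) * Real.exp (lam * (g x - c)) := mul_comm _ _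
    have hIter : Integrable
        (fun x => ∫ y, Real.exp (lam * (f (ins y x) - c)) ∂ν 0) π' :=
      hprodInt.integral_prod_right
    have hgcont : Continuous g := pi_lip_continuous hg_lip
    have hg_bound : ∀ x : Fin n → E, |g x - g 0| ≤ ∑ j, ‖x j‖ := fun x => by
      simpa using hg_lip x 0
    have hsum_le' : ∀ x : Fin n → E, (∀ j, ‖x j‖ ≤ mu) → ∑ j, ‖x j‖ ≤ n * mu := by
      intro x hx
      calc ∑ j, ‖x j‖ ≤ ∑ _j : Fin n, mu := Finset.sum_le_sum fun j _ => hx j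
        _ = n * mu := by simp [mul_comm]
    have hgint' : Integrable g π' := by
      refine integrable_of_ae_bound hgcont.aestronglyMeasurable
        (C := |g 0| + n * mu) ?_
      filter_upwards [haepi'] with x hx
      have h2 := abs_sub_abs_le_abs_sub (g x) (g 0)
      have := (hg_bound x).trans (hsum_le' x hx)
      linarith
    have hgc : |c - g 0| ≤ n * mu := by
      have h1 : c - g 0 = ∫ x, (g x - g 0) ∂π' := by
        rw [integral_sub hgint' (integrable_const _), hc_eq]
        simp
      rw [h1]
      calc |∫ x, (g x - g 0) ∂π'| ≤ ∫ x, |g x - g 0| ∂π' := by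
            simpa [Real.norm_eq_abs] using
              norm_integral_le_integral_norm (μ := π') (f := fun x => g x - g 0)
        _ ≤ ∫ _x, (n * mu : ℝ) ∂π' := by
            refine integral_mono_ae (hgint'.sub (integrable_const _)).abs (integrable_const _) ?_
            filter_upwards [haepi'] with x hx
            exact (hg_bound x).trans (hsum_le' x hx)
        _ = n * mu := by simp
    have hexp_int_g : Integrable (fun x => Real.exp (lam * (g x - c))) π' := by
      refine integrable_of_ae_bound
        ((Real.continuous_exp.comp
          (continuous_const.mul (hgcont.sub continuous_const))).aestronglyMeasurable)
        (C := Real.exp (lam * (2 * (n * mu) + mu))) ?_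
      filter_upwards [haepi'] with x hx
      rw [abs_of_nonneg (Real.exp_nonneg _)]
      apply Real.exp_le_exp.2
      have h1 := (hg_bound x).trans (hsum_le' x hx)
      have h2 := abs_sub_le (g x) (g 0) c
      have h3 : |g 0 - c| = |c - g 0| := abs_sub_comm _ _
      calc lam * (g x - c) ≤ lam * |g x - c| :=
            mul_le_mul_of_nonneg_left (le_abs_self _) hlam
        _ ≤ lam * (2 * (n * mu) + mu) := by
            refine mul_le_mul_of_nonneg_left ?_ hlam
            nlinarith [hmu.le]
    have hih := ih (fun j => ν ((0 : Fin (n+1)).succAbove j)) (fun j => hprob _)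
      (fun j => hbd _) (fun j => hvar _) g hg_lip
    rw [← hπ', ← hc_eq] at hih
    calc ∫ x, Real.exp (lam * (f x - c)) ∂Measure.pi ν
        = ∫ x, (∫ y, Real.exp (lam * (f (ins y x) - c)) ∂ν 0) ∂π' := by
          rw [key, integral_prod_symm _ hprodInt]
      _ ≤ ∫ x, Real.exp (lam ^ 2 * sigma ^ 2) * Real.exp (lam * (g x - c)) ∂π' :=
          integral_mono hIter (hexp_int_g.const_mul _) hinner
      _ = Real.exp (lam ^ 2 * sigma ^ 2) * ∫ x, Real.exp (lam * (g x - c)) ∂π' :=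
          integral_const_mul _ _
      _ ≤ Real.exp (lam ^ 2 * sigma ^ 2) * Real.exp (n * (lam ^ 2 * sigma ^ 2)) :=
          mul_le_mul_of_nonneg_left hih (Real.exp_nonneg _)
      _ = Real.exp ((n + 1 : ℕ) * (lam ^ 2 * sigma ^ 2)) := by
          rw [← Real.exp_add]
          push_cast
          ring_nf

end VB

set_option maxHeartbeats 2000000 in
theorem vector_bernstein_inequality
    {Ω : Type*} [MeasurableSpace Ω] (μ : Measure Ω) [IsProbabilityMeasure μ]
    (d M : ℕ) (hM : 0 < M)
    (X : Fin M → Ω → EuclideanSpace ℝ (Fin d))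
    (hmeas : ∀ m, Measurable (X m))
    (hindep : iIndepFun X μ)
    (hmean : ∀ m, ∫ ω, X m ω ∂μ = 0)
    (mu sigma : ℝ) (hmu : 0 < mu) (hsigma : 0 < sigma)
    (hbound : ∀ m, ∀ᵐ ω ∂μ, ‖X m ω‖ ≤ mu)
    (hvar : ∀ m, ∫ ω, ‖X m ω‖ ^ 2 ∂μ ≤ sigma ^ 2)
    (ε : ℝ) (hε : 0 < ε) (hεmu : ε < sigma ^ 2 / mu) :
    μ {ω | ε ≤ ‖(M : ℝ)⁻¹ • (∑ m, X m ω)‖} ≤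
      ENNReal.ofReal (Real.exp (-(M * ε ^ 2) / (8 * sigma ^ 2) + 1 / 4)) := by
  classical
  have hM0 : (0 : ℝ) < M := by exact_mod_cast hM
  -- joint law
  set J : Ω → (Fin M → EuclideanSpace ℝ (Fin d)) := fun ω i => X i ω with hJdef
  have hJm : Measurable J := measurable_pi_lambda _ hmeas
  set ν : Fin M → Measure (EuclideanSpace ℝ (Fin d)) := fun i => μ.map (X i) with hνdef
  haveI hprob : ∀ i, IsProbabilityMeasure (ν i) := fun i =>
    Measure.isProbabilityMeasure_map (hmeas i).aemeasurable
  have hlaw : Measure.pi ν = μ.map J := by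
    refine Measure.pi_eq fun s hs => ?_
    rw [Measure.map_apply hJm (MeasurableSet.univ_pi hs)]
    have hpre : J ⁻¹' Set.pi Set.univ s = ⋂ i ∈ Finset.univ, X i ⁻¹' s i := by
      ext ω
      simp [hJdef, Set.mem_pi]
    rw [hpre, hindep.measure_inter_preimage_eq_mul Finset.univ (fun i _ => hs i)]
    exact (Finset.prod_congr rfl fun i _ => by
      rw [hνdef]
      exact (Measure.map_apply (hmeas i) (hs i))).symm
  have hbd' : ∀ i, ∀ᵐ y ∂ν i, ‖y‖ ≤ mu := by
    intro i
    rw [hνdef]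
    rw [ae_map_iff (hmeas i).aemeasurable (measurableSet_le measurable_norm measurable_const)]
    exact hbound i
  have hvar' : ∀ i, ∫ y, ‖y‖ ^ 2 ∂ν i ≤ sigma ^ 2 := by
    intro i
    rw [hνdef, integral_map (f := fun y : EuclideanSpace ℝ (Fin d) => ‖y‖ ^ 2) (hmeas i).aemeasurable
      ((continuous_norm.pow 2).aestronglyMeasurable)]
    exact hvar i
  -- the norm-of-sum function on the product space
  set f : (Fin M → EuclideanSpace ℝ (Fin d)) → ℝ := fun x => ‖∑ i, x i‖ with hfdef
  have hf : ∀ x y, |f x - f y| ≤ ∑ i, ‖x i - y i‖ := by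
    intro x y
    calc |f x - f y| ≤ ‖(∑ i, x i) - ∑ i, y i‖ := abs_norm_sub_norm_le _ _
      _ = ‖∑ i, (x i - y i)‖ := by rw [Finset.sum_sub_distrib]
      _ ≤ ∑ i, ‖x i - y i‖ := norm_sum_le _ _
  have hfcont : Continuous f := VB.pi_lip_continuous hf
  -- T on Ω
  set T : Ω → ℝ := fun ω => ‖∑ i, X i ω‖ with hTdef
  have hTm : Measurable T := (Finset.measurable_sum Finset.univ fun i _ => hmeas i).norm
  have hTbd : ∀ᵐ ω ∂μ, T ω ≤ M * mu := by
    have hall : ∀ᵐ ω ∂μ, ∀ i, ‖X i ω‖ ≤ mu := (ae_all_iff).2 hbound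
    filter_upwards [hall] with ω hω
    calc T ω ≤ ∑ i, ‖X i ω‖ := norm_sum_le _ _
      _ ≤ ∑ _i : Fin M, mu := Finset.sum_le_sum fun i _ => hω i
      _ = M * mu := by simp [mul_comm]
  have hT_int : Integrable T μ := by
    refine VB.integrable_of_ae_bound hTm.aestronglyMeasurable (C := M * mu) ?_
    filter_upwards [hTbd] with ω hω
    rwa [abs_of_nonneg (norm_nonneg _)]
  have hT2_int : Integrable (fun ω => T ω ^ 2) μ := by
    refine VB.integrable_of_ae_bound (hTm.pow_const 2).aestronglyMeasurable
      (C := (M * mu) ^ 2) ?_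
    filter_upwards [hTbd] with ω hω
    rw [abs_of_nonneg (sq_nonneg _)]
    nlinarith [norm_nonneg (∑ i, X i ω)]
  -- second moment bound
  have hXi_int : ∀ i, Integrable (X i) μ := fun i =>
    Integrable.mono' (integrable_const mu) (hmeas i).aestronglyMeasurable (hbound i)
  have hmean_comp : ∀ i (k : Fin d), ∫ ω, X i ω k ∂μ = 0 := by
    intro i k
    have h := (EuclideanSpace.proj k (𝕜 := ℝ)).integral_comp_comm (hXi_int i)
    rw [hmean i] at h
    simpa using h
  have hcomp_meas : ∀ i (k : Fin d), Measurable fun ω => X i ω k := fun i k =>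
    (EuclideanSpace.proj k (𝕜 := ℝ)).continuous.measurable.comp (hmeas i)
  have hcomp_bd : ∀ i (k : Fin d), ∀ᵐ ω ∂μ, |X i ω k| ≤ mu := by
    intro i k
    filter_upwards [hbound i] with ω hω
    calc |X i ω k| ≤ ‖X i ω‖ := by
          have := EuclideanSpace.norm_eq (X i ω)
          have h1 : |X i ω k| = Real.sqrt (|X i ω k| ^ 2) := by
            rw [Real.sqrt_sq_eq_abs, abs_abs]
          rw [h1, this]
          apply Real.sqrt_le_sqrt
          exact Finset.single_le_sum (f := fun k => ‖X i ω k‖ ^ 2)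
            (fun l _ => by positivity) (Finset.mem_univ k) |>.trans_eq' (by
              simp [Real.norm_eq_abs])
      _ ≤ mu := hω
  have hcomp_int : ∀ i (k : Fin d), Integrable (fun ω => X i ω k) μ := fun i k =>
    VB.integrable_of_ae_bound (hcomp_meas i k).aestronglyMeasurable (hcomp_bd i k)
  have hinner_zero : ∀ i j, i ≠ j → ∫ ω, (inner ℝ (X i ω) (X j ω) : ℝ) ∂μ = 0 := by
    intro i j hij
    have hexpand : ∀ ω, (inner ℝ (X i ω) (X j ω) : ℝ) = ∑ k, X i ω k * X j ω k := by
      intro ω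
      simp [PiLp.inner_apply, RCLike.inner_apply, conj_trivial]
      exact Finset.sum_congr rfl fun _ _ => mul_comm _ _
    have hprod_int : ∀ k : Fin d, Integrable (fun ω => X i ω k * X j ω k) μ := by
      intro k
      refine VB.integrable_of_ae_bound
        ((hcomp_meas i k).mul (hcomp_meas j k)).aestronglyMeasurable (C := mu * mu) ?_
      filter_upwards [hcomp_bd i k, hcomp_bd j k] with ω h1 h2
      rw [abs_mul]
      exact mul_le_mul h1 h2 (abs_nonneg _) hmu.le
    rw [integral_congr_ae (Filter.Eventually.of_forall hexpand),
      integral_finset_sum _ (fun k _ => hprod_int k)]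
    refine Finset.sum_eq_zero fun k _ => ?_
    have hind : IndepFun (fun ω => X i ω k) (fun ω => X j ω k) μ :=
        (hindep.indepFun hij).comp
        (EuclideanSpace.proj k (𝕜 := ℝ)).continuous.measurable
        (EuclideanSpace.proj k (𝕜 := ℝ)).continuous.measurable
    have h := ProbabilityTheory.IndepFun.integral_mul_eq_mul_integral hind (hcomp_meas i k).aestronglyMeasurable
      (hcomp_meas j k).aestronglyMeasurable
    have h2 : ∫ ω, X i ω k * X j ω k ∂μ
        = (∫ ω, X i ω k ∂μ) * ∫ ω, X j ω k ∂μ := h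
    rw [h2, hmean_comp i k, zero_mul]
  have hinner_int : ∀ i j, Integrable (fun ω => (inner ℝ (X i ω) (X j ω) : ℝ)) μ := by
    intro i j
    refine VB.integrable_of_ae_bound
      (((hmeas i).inner (hmeas j)).aestronglyMeasurable) (C := mu * mu) ?_
    filter_upwards [hbound i, hbound j] with ω h1 h2
    calc |(inner ℝ (X i ω) (X j ω) : ℝ)| ≤ ‖X i ω‖ * ‖X j ω‖ := abs_real_inner_le_norm _ _
      _ ≤ mu * mu := mul_le_mul h1 h2 (norm_nonneg _) hmu.le
  have hT2 : ∫ ω, T ω ^ 2 ∂μ ≤ M * sigma ^ 2 := by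
    have hTsq : ∀ ω, T ω ^ 2 = ∑ i, ∑ j, (inner ℝ (X i ω) (X j ω) : ℝ) := by
      intro ω
      rw [hTdef]
      simp only
      rw [← real_inner_self_eq_norm_sq, sum_inner]
      exact Finset.sum_congr rfl fun i _ => by rw [inner_sum]
    calc ∫ ω, T ω ^ 2 ∂μ = ∑ i, ∑ j, ∫ ω, (inner ℝ (X i ω) (X j ω) : ℝ) ∂μ := by
          rw [integral_congr_ae (Filter.Eventually.of_forall hTsq),
            integral_finset_sum _ (fun i _ => integrable_finset_sum _ fun j _ => hinner_int i j)]
          exact Finset.sum_congr rfl fun i _ => integral_finset_sum _ fun j _ => hinner_int i j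
      _ = ∑ i : Fin M, ∫ ω, (inner ℝ (X i ω) (X i ω) : ℝ) ∂μ := by
          refine Finset.sum_congr rfl fun i _ => ?_
          refine Finset.sum_eq_single_of_mem i (Finset.mem_univ i) fun j _ hj =>
            hinner_zero i j (Ne.symm hj)
      _ ≤ ∑ _i : Fin M, sigma ^ 2 := by
          refine Finset.sum_le_sum fun i _ => ?_
          have : ∀ ω, (inner ℝ (X i ω) (X i ω) : ℝ) = ‖X i ω‖ ^ 2 := fun ω =>
            real_inner_self_eq_norm_sq _
          rw [integral_congr_ae (Filter.Eventually.of_forall this)]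
          exact hvar i
      _ = M * sigma ^ 2 := by simp [mul_comm]
  -- mean bound
  have hTnn : 0 ≤ ∫ ω, T ω ∂μ := integral_nonneg fun ω => norm_nonneg _
  have hTmean_sq : (∫ ω, T ω ∂μ) ^ 2 ≤ M * sigma ^ 2 := by
    set em := ∫ ω, T ω ∂μ with hem
    have hnn : 0 ≤ ∫ ω, (T ω - em) ^ 2 ∂μ := integral_nonneg fun ω => sq_nonneg _
    have hexpand : (fun ω => (T ω - em) ^ 2)
        = fun ω => T ω ^ 2 + ((-2 * em) * T ω + em ^ 2) := by
      funext ω; ring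
    have hA : Integrable (fun ω => -2 * em * T ω + em ^ 2) μ := by
      exact (hT_int.const_mul _).add (integrable_const _)
    have heq : ∫ ω, (T ω - em) ^ 2 ∂μ = ∫ ω, T ω ^ 2 ∂μ - em ^ 2 := by
      rw [hexpand, integral_add hT2_int hA,
        integral_add (hT_int.const_mul _) (integrable_const _), integral_const_mul]
      simp only [integral_const, measure_univ, probReal_univ, ENNReal.toReal_one, smul_eq_mul, one_mul, ← hem]
      ring
    nlinarith
  -- transfer of the mgf bound
  set c : ℝ := ∫ x, f x ∂Measure.pi ν with hcdef
  have hcT : ∫ ω, T ω ∂μ = c := by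
    rw [hcdef, hlaw, integral_map hJm.aemeasurable hfcont.aestronglyMeasurable]
  have hmgf : ∀ lam : ℝ, 0 ≤ lam → 2 * lam * mu ≤ 1 →
      ∫ ω, Real.exp (lam * (T ω - c)) ∂μ ≤ Real.exp (M * (lam ^ 2 * sigma ^ 2)) := by
    intro lam h1 h2
    have hb := VB.mgf_pi_bound hmu h1 h2 M ν hprob hbd' hvar' f hf
    rw [← hcdef] at hb
    rw [hlaw, integral_map hJm.aemeasurable] at hb
    · exact hb
    · exact (Real.continuous_exp.comp
        (continuous_const.mul (hfcont.sub continuous_const))).aestronglyMeasurable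
  -- rewrite the event
  have hev : {ω | ε ≤ ‖(M : ℝ)⁻¹ • (∑ m, X m ω)‖} = {ω | (M : ℝ) * ε - c ≤ T ω - c} := by
    ext ω
    have hnorm : ‖(M : ℝ)⁻¹ • (∑ m, X m ω)‖ = (M : ℝ)⁻¹ * T ω := by
      rw [norm_smul, hTdef]
      simp [abs_of_pos (inv_pos.2 hM0), Real.norm_eq_abs]
    simp only [Set.mem_setOf_eq, hnorm]
    have h2 : (M : ℝ) * ((M : ℝ)⁻¹ * T ω) = T ω := by field_simp
    have h3 : (M : ℝ)⁻¹ * ((M : ℝ) * ε) = ε := by field_simp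
    constructor
    · intro h
      have := mul_le_mul_of_nonneg_left h hM0.le
      rw [h2] at this
      linarith
    · intro h
      have h4 : (M : ℝ) * ε ≤ T ω := by linarith
      have := mul_le_mul_of_nonneg_left h4 (inv_pos.2 hM0).le
      rw [h3] at this
      linarith
  rcases le_or_gt ((M : ℝ) * ε ^ 2) (2 * sigma ^ 2) with hcase | hcase
  · -- trivial case: the right-hand side is at least one
    have h1 : (1 : ℝ) ≤ Real.exp (-(M * ε ^ 2) / (8 * sigma ^ 2) + 1 / 4) := by
      apply Real.one_le_exp
      have h8 : (0 : ℝ) < 8 * sigma ^ 2 := by positivity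
      rw [div_add' _ _ _ h8.ne', le_div_iff₀ h8]
      nlinarith
    calc μ {ω | ε ≤ ‖(M : ℝ)⁻¹ • (∑ m, X m ω)‖} ≤ 1 := prob_le_one
      _ = ENNReal.ofReal 1 := by simp
      _ ≤ ENNReal.ofReal (Real.exp (-(M * ε ^ 2) / (8 * sigma ^ 2) + 1 / 4)) :=
          ENNReal.ofReal_le_ofReal h1
  · -- main case
    set V : ℝ := M * sigma ^ 2 with hV
    have hVpos : 0 < V := by positivity
    set s : ℝ := Real.sqrt V with hs
    have hs_nn : 0 ≤ s := Real.sqrt_nonneg _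
    have hs_sq : s ^ 2 = V := Real.sq_sqrt hVpos.le
    set a : ℝ := (M : ℝ) * ε with ha
    have ha_pos : 0 < a := by positivity
    have ha_sq : 2 * V < a ^ 2 := by
      have : (M : ℝ) * (M * ε ^ 2) > (M : ℝ) * (2 * sigma ^ 2) :=
        (mul_lt_mul_iff_right₀ hM0).2 hcase
      calc 2 * V = (M : ℝ) * (2 * sigma ^ 2) := by rw [hV]; ring
        _ < (M : ℝ) * (M * ε ^ 2) := this
        _ = a ^ 2 := by rw [ha]; ring
    have hcnn : 0 ≤ c := hcT ▸ hTnn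
    have hcs : c ≤ s := by
      have h1 : c ^ 2 ≤ V := by rw [← hcT]; exact hTmean_sq
      nlinarith [hcnn, hs_nn, hs_sq, sq_nonneg (c - s), sq_nonneg (c + s)]
    set t : ℝ := a - c with ht
    have htpos : 0 < t := by
      have : s < a := by nlinarith
      nlinarith
    set lam : ℝ := t / (2 * V) with hlam
    have hlam_nn : 0 ≤ lam := by positivity
    have hlam_mu : 2 * lam * mu ≤ 1 := by
      have hεmu' : ε * mu < sigma ^ 2 := by
        rw [lt_div_iff₀ hmu] at hεmu
        exact hεmu
      have hta : t ≤ a := by rw [ht]; linarith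
      have h1 : lam ≤ a / (2 * V) := by
        rw [hlam]
        exact (div_le_div_iff_of_pos_right (by positivity)).2 hta
      have h2 : a * mu / V < 1 := by
        rw [div_lt_one hVpos, hV, ha]
        nlinarith
      have h3 : 2 * (a / (2 * V)) * mu = a * mu / V := by
        field_simp
      nlinarith [hmu.le, h1, h2, h3, hVpos]
    -- Chernoff bound
    have hY_int : Integrable (fun ω => Real.exp (lam * (T ω - c))) μ := by
      refine VB.integrable_of_ae_bound
        ((Real.measurable_exp.comp
          ((hTm.sub measurable_const).const_mul lam)).aestronglyMeasurable)
        (C := Real.exp (lam * ((M : ℝ) * mu + |c|))) ?_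
      filter_upwards [hTbd] with ω hω
      rw [abs_of_nonneg (Real.exp_nonneg _)]
      apply Real.exp_le_exp.2
      have h0 : 0 ≤ T ω := norm_nonneg _
      have hYb : T ω - c ≤ (M : ℝ) * mu + |c| := by
        have := neg_abs_le c
        linarith
      exact mul_le_mul_of_nonneg_left hYb hlam_nn
    have hcher := measure_ge_le_exp_mul_mgf (X := fun ω => T ω - c) (μ := μ) (ε := t)
      hlam_nn hY_int
    have hmgfY : mgf (fun ω => T ω - c) μ lam ≤ Real.exp ((M : ℝ) * (lam ^ 2 * sigma ^ 2)) :=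
      hmgf lam hlam_nn hlam_mu
    have hfinal : (μ {ω | t ≤ T ω - c}).toReal
        ≤ Real.exp (-((M : ℝ) * ε ^ 2) / (8 * sigma ^ 2) + 1 / 4) := by
      refine hcher.trans ?_
      calc Real.exp (-lam * t) * mgf (fun ω => T ω - c) μ lam
          ≤ Real.exp (-lam * t) * Real.exp ((M : ℝ) * (lam ^ 2 * sigma ^ 2)) :=
            mul_le_mul_of_nonneg_left hmgfY (Real.exp_nonneg _)
        _ = Real.exp (-lam * t + (M : ℝ) * (lam ^ 2 * sigma ^ 2)) := (Real.exp_add _ _).symm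
        _ ≤ Real.exp (-((M : ℝ) * ε ^ 2) / (8 * sigma ^ 2) + 1 / 4) := by
            apply Real.exp_le_exp.2
            have hVexp : (M : ℝ) * (lam ^ 2 * sigma ^ 2) = lam ^ 2 * V := by rw [hV]; ring
            have hE : -lam * t + lam ^ 2 * V = -(t ^ 2) / (4 * V) := by
              rw [hlam]
              field_simp
              ring
            have hts : a - s ≤ t := by rw [ht]; linarith
            have hasnn : 0 ≤ a - s := by nlinarith
            have h4 : a ^ 2 / 2 - V ≤ t ^ 2 := by
              nlinarith [sq_nonneg (a - 2 * s), hs_sq, hs_nn, htpos.le]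
            have h5 : -(t ^ 2) / (4 * V) ≤ -(a ^ 2 / 2 - V) / (4 * V) := by
              exact (div_le_div_iff_of_pos_right (by positivity : (0:ℝ) < 4 * V)).2 (by linarith)
            have h6 : -(a ^ 2 / 2 - V) / (4 * V) = -((M : ℝ) * ε ^ 2) / (8 * sigma ^ 2) + 1 / 4 := by
              rw [hV, ha]
              field_simp
              ring
            rw [hVexp, hE]
            rw [h6] at h5
            exact h5
    rw [hev]
    have hμeq : {ω | a - c ≤ T ω - c} = {ω | t ≤ T ω - c} := by rw [← ht]
    rw [hμeq]
    calc μ {ω | t ≤ T ω - c}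
        = ENNReal.ofReal ((μ {ω | t ≤ T ω - c}).toReal) :=
          (ENNReal.ofReal_toReal (measure_ne_top _ _)).symm
      _ ≤ ENNReal.ofReal (Real.exp (-((M : ℝ) * ε ^ 2) / (8 * sigma ^ 2) + 1 / 4)) :=
          ENNReal.ofReal_le_ofReal hfinal
end
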